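/- Let m ≥ 1, p₀, p₁ ∈ (0,1), and α, β ∈ (0,1). Set A = (1−β)/α and B = β/(1−α), and let L(ω) = p₁^{d(ω)} (1−p₁)^{m−d(ω)} / (p₀^{d(ω)} (1−p₀)^{m−d(ω)}) be the likelihood ratio on Ω_m = (Fin m → Bool). Suppose R ⊆ Ω_m is a decision region with R ⊆ {ω : L(ω) ≥ A} and Ω_m \ R ⊆ {ω : L(ω) ≤ B}. Define the actual error probabilities α' = μ_{p₀}(R) and β' =(μ_{p₁}(Ω_m \ R)). Then α' + β' ≤ α + β. -/

import Mathlib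

open MeasureTheory
open scoped ENNReal

/-- The number of successes (`true` outcomes) among `m` Bernoulli observations. -/
def numTrue {m : ℕ} (ω : Fin m → Bool) : ℕ :=
  (Finset.univ.filter fun i => ω i = true).card

/-- The product measure of `m` i.i.d. Bernoulli(`p`) trials on `Fin m → Bool`. -/
noncomputable def bernProd (m : ℕ) (p : ℝ≥0∞) (hp : p ≤ 1) : Measure (Fin m → Bool) :=
  Measure.pi fun _ => (PMF.bernoulli p.toNNReal
    (by exact_mod_cast ENNReal.coe_toNNReal_le_self.trans hp)).toMeasure

lemma bernProd_singleton (m : ℕ) (p : ℝ≥0∞) (hp : p ≤ 1) (ω : Fin m → Bool) :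
    bernProd m p hp {ω} = p ^ numTrue ω * (1 - p) ^ (m - numTrue ω) := by
  have h1 : ({ω} : Set (Fin m → Bool)) = Set.univ.pi fun i => {ω i} := by
    ext x; simp [funext_iff]
  rw [bernProd, h1, Measure.pi_pi]
  have hpt : p ≠ ⊤ := ne_top_of_le_ne_top ENNReal.one_ne_top hp
  have h2 : ∀ i, (PMF.bernoulli p.toNNReal
      (by exact_mod_cast ENNReal.coe_toNNReal_le_self.trans hp)).toMeasure {ω i} =
      if ω i then p else (1 - p) := by
    intro i
    rw [PMF.toMeasure_apply_singleton _ _ (measurableSet_singleton _)]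
    cases h : ω i <;> simp [PMF.bernoulli, hpt, ENNReal.coe_sub]
  simp_rw [h2]
  rw [Finset.prod_ite]
  have hc : (Finset.univ.filter fun i => ω i = false).card = m - numTrue ω := by
    have h3 := Finset.card_filter_add_card_filter_not
      (s := (Finset.univ : Finset (Fin m))) (p := fun i => ω i = true)
    simp only [Bool.not_eq_true, Finset.card_univ, Fintype.card_fin] at h3
    unfold numTrue; omega
  simp [numTrue, hc]

lemma bernProd_set (m : ℕ) (p : ℝ≥0∞) (hp : p ≤ 1) (S : Set (Fin m → Bool))
    [DecidablePred (· ∈ S)] :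
    bernProd m p hp S =
      ∑ ω ∈ Finset.univ.filter (· ∈ S), bernProd m p hp {ω} := by
  have hS : S = ⋃ ω ∈ Finset.univ.filter (· ∈ S), ({ω} : Set (Fin m → Bool)) := by
    ext x; simp
  conv_lhs => rw [hS]
  rw [measure_biUnion_finset
    (fun x _ y _ hxy => by simp [Function.onFun, Set.disjoint_singleton, hxy])
    (fun b _ => measurableSet_singleton b)]

/-- Wald's bound for the SPRT with thresholds `A = (1-β)/α` and `B = β/(1-α)`: if the
region `R` of acceptance of `H₁` lies where the likelihood ratio is at least `A`, and
its complement lies where the likelihood ratio is at most `B`, then the actual error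
probabilities `α' = μ_{p₀}(R)` and `β' = μ_{p₁}(Rᶜ)` satisfy `α' + β' ≤ α + β`. -/
theorem sprt_wald_thresholds_error_sum (m : ℕ) (hm : 1 ≤ m)
    (p₀ p₁ : ℝ≥0∞) (h₀pos : 0 < p₀) (h₀lt : p₀ < 1) (h₁pos : 0 < p₁) (h₁lt : p₁ < 1)
    (α β : ℝ≥0∞) (hαpos : 0 < α) (hαlt : α < 1) (hβpos : 0 < β) (hβlt : β < 1)
    (A B : ℝ≥0∞) (hA : A = (1 - β) / α) (hB : B = β / (1 - α))
    (L : (Fin m → Bool) → ℝ≥0∞)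
    (hL : ∀ ω, L ω = p₁ ^ numTrue ω * (1 - p₁) ^ (m - numTrue ω) /
      (p₀ ^ numTrue ω * (1 - p₀) ^ (m - numTrue ω)))
    (R : Set (Fin m → Bool))
    (hR : R ⊆ {ω | A ≤ L ω}) (hRc : Rᶜ ⊆ {ω | L ω ≤ B})
    (α' β' : ℝ≥0∞)
    (hα' : α' = bernProd m p₀ h₀lt.le R) (hβ' : β' = bernProd m p₁ h₁lt.le Rᶜ) :
    α' + β' ≤ α + β := by
  classical
  haveI i0 : IsProbabilityMeasure (bernProd m p₀ h₀lt.le) := by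
    unfold bernProd; infer_instance
  haveI i1 : IsProbabilityMeasure (bernProd m p₁ h₁lt.le) := by
    unfold bernProd; infer_instance
  have hmass : ∀ ω, bernProd m p₁ h₁lt.le {ω} = L ω * bernProd m p₀ h₀lt.le {ω} := by
    intro ω
    rw [bernProd_singleton, bernProd_singleton, hL]
    refine (ENNReal.div_mul_cancel ?_ ?_).symm
    · exact mul_ne_zero (pow_ne_zero _ h₀pos.ne') (pow_ne_zero _ (tsub_pos_of_lt h₀lt).ne')
    · exact ENNReal.mul_ne_top (ENNReal.pow_ne_top (h₀lt.trans_le le_top).ne)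
        (ENNReal.pow_ne_top (ENNReal.sub_ne_top ENNReal.one_ne_top))
  have key1 : A * bernProd m p₀ h₀lt.le R ≤ bernProd m p₁ h₁lt.le R := by
    rw [bernProd_set m p₀ h₀lt.le R, bernProd_set m p₁ h₁lt.le R, Finset.mul_sum]
    refine Finset.sum_le_sum fun ω hω => ?_
    rw [hmass ω]
    exact mul_le_mul_left (hR (Finset.mem_filter.mp hω).2) _
  have key2 : bernProd m p₁ h₁lt.le Rᶜ ≤ B * bernProd m p₀ h₀lt.le Rᶜ := by
    rw [bernProd_set m p₀ h₀lt.le Rᶜ, bernProd_set m p₁ h₁lt.le Rᶜ, Finset.mul_sum]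
    refine Finset.sum_le_sum fun ω hω => ?_
    rw [hmass ω]
    exact mul_le_mul_left (hRc (Finset.mem_filter.mp hω).2) _
  have hμ1R : bernProd m p₁ h₁lt.le R = 1 - β' := by
    have h := prob_compl_eq_one_sub (μ := bernProd m p₁ h₁lt.le)
      ((Rᶜ).to_countable.measurableSet)
    rw [compl_compl] at h
    rw [hβ']; exact h
  have hμ0Rc : bernProd m p₀ h₀lt.le Rᶜ = 1 - α' := by
    have h := prob_compl_eq_one_sub (μ := bernProd m p₀ h₀lt.le)
      (R.to_countable.measurableSet)
    rw [hα']; exact h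
  have h1 : A * α' ≤ 1 - β' := by rw [hα', ← hμ1R]; exact key1
  have h2 : β' ≤ B * (1 - α') := by rw [hβ', ← hμ0Rc]; exact key2
  have hα'le : α' ≤ 1 := hα' ▸ prob_le_one
  have hβ'le : β' ≤ 1 := hβ' ▸ prob_le_one
  -- pass to real numbers
  have h1' := ENNReal.toReal_mono (ENNReal.sub_ne_top ENNReal.one_ne_top) h1
  have h2' := ENNReal.toReal_mono
    (ENNReal.mul_ne_top (hB ▸ (ENNReal.div_lt_top ((hβlt.trans_le le_top).ne)
      (tsub_pos_of_lt hαlt).ne').ne) (ENNReal.sub_ne_top ENNReal.one_ne_top)) h2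
  rw [hA, ENNReal.toReal_mul, ENNReal.toReal_div,
    ENNReal.toReal_sub_of_le hβlt.le ENNReal.one_ne_top,
    ENNReal.toReal_sub_of_le hβ'le ENNReal.one_ne_top, ENNReal.toReal_one] at h1'
  rw [hB, ENNReal.toReal_mul, ENNReal.toReal_div,
    ENNReal.toReal_sub_of_le hαlt.le ENNReal.one_ne_top,
    ENNReal.toReal_sub_of_le hα'le ENNReal.one_ne_top, ENNReal.toReal_one] at h2'
  have ha0 : 0 < α.toReal := ENNReal.toReal_pos hαpos.ne' (hαlt.trans_le le_top).ne
  have ha1 : α.toReal < 1 := by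
    have := (ENNReal.toReal_lt_toReal (hαlt.trans_le le_top).ne ENNReal.one_ne_top).mpr hαlt
    simpa using this
  have hb0 : 0 < β.toReal := ENNReal.toReal_pos hβpos.ne' (hβlt.trans_le le_top).ne
  rw [div_mul_eq_mul_div, div_le_iff₀ ha0] at h1'
  rw [div_mul_eq_mul_div, le_div_iff₀ (by linarith : (0:ℝ) < 1 - α.toReal)] at h2'
  have hgoal : (α' + β').toReal ≤ (α + β).toReal := by
    rw [ENNReal.toReal_add (hα'le.trans_lt ENNReal.one_lt_top).ne
        (hβ'le.trans_lt ENNReal.one_lt_top).ne,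
      ENNReal.toReal_add (hαlt.trans_le le_top).ne (hβlt.trans_le le_top).ne]
    nlinarith [h1', h2']
  exact (ENNReal.toReal_le_toReal
    (ENNReal.add_ne_top.mpr ⟨(hα'le.trans_lt ENNReal.one_lt_top).ne,
      (hβ'le.trans_lt ENNReal.one_lt_top).ne⟩)
    (ENNReal.add_ne_top.mpr ⟨(hαlt.trans_le le_top).ne,
      (hβlt.trans_le le_top).ne⟩)).mp hgoal
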